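/- Two words δ, τ in the free monoid on n generators are cyclically equivalent (one is a cyclic permutation of the other) if and only if δ − τ is a commutator in the free algebra ℂ⟨x₁,…,xₙ⟩, i.e., δ − τ = pq − qp for some noncommutative polynomials p, q (equivalently, δ − τ lies in the linear span of commutators). -/

import Mathlib

open Finsupp List

/-- two words in the free monoid are cyclically equivalent iff their
difference in the free algebra `ℂ⟨x₁,…,xₙ⟩` is a commutator. -/
theorem cyclically_equivalent_iff_commutator (n : ℕ) (δ τ : FreeMonoid (Fin n)) :
    (∃ u w : FreeMonoid (Fin n), δ = u * w ∧ τ = w * u) ↔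
    (∃ p q : MonoidAlgebra ℂ (FreeMonoid (Fin n)),
      MonoidAlgebra.of ℂ (FreeMonoid (Fin n)) δ - MonoidAlgebra.of ℂ (FreeMonoid (Fin n)) τ
        = p * q - q * p) := by
  classical
  constructor
  · rintro ⟨u, w, rfl, rfl⟩
    exact ⟨MonoidAlgebra.of ℂ _ u, MonoidAlgebra.of ℂ _ w, by simp [map_mul]⟩
  · rintro ⟨p, q, h⟩
    set g : FreeMonoid (Fin n) → ℂ → ℂ :=
      fun w c => if (FreeMonoid.toList w) ~r (FreeMonoid.toList δ) then c else 0 with hg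
    have hg0 : ∀ w, g w 0 = 0 := by intro w; simp [hg]
    have hgadd : ∀ w b₁ b₂, g w (b₁ + b₂) = g w b₁ + g w b₂ := by
      intro w b₁ b₂; simp only [hg]; split <;> simp
    have hgsub : ∀ w b₁ b₂, g w (b₁ - b₂) = g w b₁ - g w b₂ := by
      intro w b₁ b₂; simp only [hg]; split <;> simp
    set F : MonoidAlgebra ℂ (FreeMonoid (Fin n)) →+ ℂ :=
      { toFun := fun x => x.coeff.sum g
        map_zero' := by simp
        map_add' := fun x y => Finsupp.sum_add_index' hg0 hgadd } with hF
    have hFsingle : ∀ a b, F (MonoidAlgebra.single a b) = g a b := by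
      intro a b
      exact Finsupp.sum_single_index (hg0 a)
    have hswap : ∀ a c : FreeMonoid (Fin n),
        ((FreeMonoid.toList (a * c)) ~r (FreeMonoid.toList δ)) ↔
        ((FreeMonoid.toList (c * a)) ~r (FreeMonoid.toList δ)) := by
      intro a c
      constructor <;> intro hr <;>
        [exact (List.isRotated_append.trans hr);
         exact (List.isRotated_append.trans hr)]
    have key : ∀ x y : MonoidAlgebra ℂ (FreeMonoid (Fin n)), F (x * y) = F (y * x) := by
      intro x y
      rw [MonoidAlgebra.mul_def, MonoidAlgebra.mul_def, map_finsuppSum, map_finsuppSum]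
      simp only [map_finsuppSum, hFsingle]
      rw [Finsupp.sum_comm]
      refine Finsupp.sum_congr fun a _ => Finsupp.sum_congr fun c _ => ?_
      simp only [hg]
      rw [if_congr (hswap c a) rfl rfl, mul_comm]
    have hδ : F (MonoidAlgebra.of ℂ (FreeMonoid (Fin n)) δ) = 1 := by
      rw [MonoidAlgebra.of_apply, hFsingle]
      simp only [hg, if_pos (List.IsRotated.refl _)]
    have hτ : F (MonoidAlgebra.of ℂ (FreeMonoid (Fin n)) τ)
        = if (FreeMonoid.toList τ) ~r (FreeMonoid.toList δ) then (1 : ℂ) else 0 := by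
      rw [MonoidAlgebra.of_apply, hFsingle]
    have h2 := congrArg F h
    rw [map_sub, map_sub, key, hδ, hτ, sub_self] at h2
    have hrot : (FreeMonoid.toList τ) ~r (FreeMonoid.toList δ) := by
      by_contra hc
      rw [if_neg hc] at h2
      norm_num at h2
    obtain ⟨m, hm, hrm⟩ := List.isRotated_iff_mod.mp hrot
    rw [List.rotate_eq_drop_append_take hm] at hrm
    refine ⟨FreeMonoid.ofList ((FreeMonoid.toList τ).drop m),
            FreeMonoid.ofList ((FreeMonoid.toList τ).take m), ?_, ?_⟩
    · rw [← FreeMonoid.ofList_append, hrm, FreeMonoid.ofList_toList]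
    · rw [← FreeMonoid.ofList_append, List.take_append_drop, FreeMonoid.ofList_toList]
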